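/- Over an algebraically closed field F, for parameters α, β ∈ F \ {0,1}, the algebras E^α_{5,18} : e₁² = e₄, e₂² = e₄ + e₅, e₃² = e₄ + α e₅, e₄² = e₅ and E^β_{5,18} are isomorphic if and only if β ∈ {α, α⁻¹, 1−α, (1−α)⁻¹, α(α−1)⁻¹, α⁻¹(α−1)}. -/

import Mathlib

/-- Multiplication of `E₅,₁₈^α : e₁² = e₄, e₂² = e₄ + e₅, e₃² = e₄ + α e₅, e₄² = e₅`
on `F⁵` (all other products of natural basis vectors are zero). -/
def mulE518 {F : Type*} [Field F] (α : F) :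
    (Fin 5 → F) → (Fin 5 → F) → (Fin 5 → F) :=
  fun x y => ![0, 0, 0, x 0 * y 0 + x 1 * y 1 + x 2 * y 2,
    x 1 * y 1 + α * (x 2 * y 2) + x 3 * y 3]

namespace Stmt16

variable {F : Type*} [Field F]


def emb : Fin 3 → Fin 5 := fun i => ⟨i.1, by omega⟩

def phiFun {F : Type*} [Field F] (s p q : F) (r : Fin 3 → Fin 3) :
    (Fin 5 → F) → (Fin 5 → F) :=
  fun x => ![s * x (emb (r 0)), s * x (emb (r 1)), s * x (emb (r 2)),
    p * x 3, q * x 3 + p ^ 2 * x 4]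

theorem phiFun_emb {F : Type*} [Field F] (s p q : F) (r : Fin 3 → Fin 3)
    (x : Fin 5 → F) (k : Fin 3) : phiFun s p q r x (emb k) = s * x (emb (r k)) := by
  fin_cases k <;> rfl

theorem phiFun_comp {F : Type*} [Field F] (s p q s' p' q' : F) (r r' : Fin 3 → Fin 3)
    (x : Fin 5 → F) :
    phiFun s p q r (phiFun s' p' q' r' x) =
      phiFun (s * s') (p * p') (q * p' + p ^ 2 * q') (fun k => r' (r k)) x := by
  funext j
  fin_cases j
  · show phiFun s p q r (phiFun s' p' q' r' x) (emb 0) =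
        phiFun (s * s') (p * p') (q * p' + p ^ 2 * q') (fun k => r' (r k)) x (emb 0)
    rw [phiFun_emb, phiFun_emb, phiFun_emb]; ring
  · show phiFun s p q r (phiFun s' p' q' r' x) (emb 1) =
        phiFun (s * s') (p * p') (q * p' + p ^ 2 * q') (fun k => r' (r k)) x (emb 1)
    rw [phiFun_emb, phiFun_emb, phiFun_emb]; ring
  · show phiFun s p q r (phiFun s' p' q' r' x) (emb 2) =
        phiFun (s * s') (p * p') (q * p' + p ^ 2 * q') (fun k => r' (r k)) x (emb 2)
    rw [phiFun_emb, phiFun_emb, phiFun_emb]; ring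
  · show phiFun s p q r (phiFun s' p' q' r' x) 3 = _
    simp [phiFun]; ring
  · show phiFun s p q r (phiFun s' p' q' r' x) 4 = _
    simp [phiFun]; ring

theorem phiFun_id {F : Type*} [Field F] (x : Fin 5 → F) :
    phiFun (1:F) 1 0 id x = x := by
  funext j
  fin_cases j <;> simp [phiFun, emb]

def phiLin {F : Type*} [Field F] (s p q : F) (r : Fin 3 → Fin 3) :
    (Fin 5 → F) →ₗ[F] (Fin 5 → F) where
  toFun := phiFun s p q r
  map_add' x y := by funext j; fin_cases j <;> simp [phiFun] <;> ring
  map_smul' c x := by funext j; fin_cases j <;> simp [phiFun] <;> ring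



theorem mul_emb {F : Type*} [Field F] (α : F) (x y : Fin 5 → F) (k : Fin 3) :
    mulE518 α x y (emb k) = 0 := by
  fin_cases k <;> rfl

/-- Main backward construction. -/
theorem exists_iso {F : Type*} [Field F] (α β s p q : F) (r ri : Fin 3 → Fin 3)
    (hp : p ≠ 0) (hs : s ^ 2 = p)
    (hir : ∀ k, ri (r k) = k) (hri : ∀ k, r (ri k) = k)
    (hcond : ∀ j : Fin 3, p * (![0, 1, β] (ri j)) = q + p ^ 2 * (![0, 1, α] j)) :
    ∃ σ : (Fin 5 → F) ≃ₗ[F] (Fin 5 → F),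
      ∀ x y, σ (mulE518 α x y) = mulE518 β (σ x) (σ y) := by
  have hs0 : s ≠ 0 := fun h => hp (by rw [← hs, h]; ring)
  refine ⟨LinearEquiv.ofLinear (phiLin s p q r) (phiLin s⁻¹ p⁻¹ (-q * (p^3)⁻¹) ri) ?_ ?_,
    ?_⟩
  · apply LinearMap.ext; intro x
    show phiFun s p q r (phiFun s⁻¹ p⁻¹ (-q * (p^3)⁻¹) ri x) = x
    rw [phiFun_comp]
    have h1 : s * s⁻¹ = 1 := mul_inv_cancel₀ hs0
    have h2 : p * p⁻¹ = 1 := mul_inv_cancel₀ hp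
    have h3 : q * p⁻¹ + p ^ 2 * (-q * (p^3)⁻¹) = 0 := by field_simp; ring
    have h4 : (fun k => ri (r k)) = (id : Fin 3 → Fin 3) := by funext k; simp [hir]
    rw [h1, h2, h3, h4, phiFun_id]
  · apply LinearMap.ext; intro x
    show phiFun s⁻¹ p⁻¹ (-q * (p^3)⁻¹) ri (phiFun s p q r x) = x
    rw [phiFun_comp]
    have h1 : s⁻¹ * s = 1 := inv_mul_cancel₀ hs0
    have h2 : p⁻¹ * p = 1 := inv_mul_cancel₀ hp
    have h3 : -q * (p^3)⁻¹ * p + p⁻¹ ^ 2 * q = 0 := by field_simp; ring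
    have h4 : (fun k => r (ri k)) = (id : Fin 3 → Fin 3) := by funext k; simp [hri]
    rw [h1, h2, h3, h4, phiFun_id]
  · intro x y
    show phiFun s p q r (mulE518 α x y) = mulE518 β (phiFun s p q r x) (phiFun s p q r y)
    funext j
    fin_cases j
    · show phiFun s p q r (mulE518 α x y) (emb 0) = 0
      rw [phiFun_emb, mul_emb]; ring
    · show phiFun s p q r (mulE518 α x y) (emb 1) = 0
      rw [phiFun_emb, mul_emb]; ring
    · show phiFun s p q r (mulE518 α x y) (emb 2) = 0
      rw [phiFun_emb, mul_emb]; ring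
    · -- component 3
      show phiFun s p q r (mulE518 α x y) 3 = _
      have hsum : ∑ k : Fin 3, (x (emb (r k)) * y (emb (r k)))
          = ∑ k : Fin 3, x (emb k) * y (emb k) := by
        have := Equiv.sum_comp (⟨r, ri, hir, hri⟩ : Fin 3 ≃ Fin 3)
          (fun k => x (emb k) * y (emb k))
        simpa using this
      rw [Fin.sum_univ_three, Fin.sum_univ_three] at hsum
      simp only [phiFun, mulE518]
      show p * _ = _
      simp only [Matrix.cons_val_zero, Matrix.cons_val_one, Matrix.head_cons,
        Matrix.cons_val_two, Matrix.tail_cons]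
      have h0 : (emb 0 : Fin 5) = 0 := rfl
      have h1 : (emb 1 : Fin 5) = 1 := rfl
      have h2 : (emb 2 : Fin 5) = 2 := rfl
      rw [h0, h1, h2] at hsum
      calc p * (x 0 * y 0 + x 1 * y 1 + x 2 * y 2)
          = s^2 * (x (emb (r 0)) * y (emb (r 0)) + x (emb (r 1)) * y (emb (r 1))
              + x (emb (r 2)) * y (emb (r 2))) := by rw [hs, ← hsum]
        _ = s * x (emb (r 0)) * (s * y (emb (r 0))) + s * x (emb (r 1)) * (s * y (emb (r 1)))
              + s * x (emb (r 2)) * (s * y (emb (r 2))) := by ring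
    · -- component 4
      show phiFun s p q r (mulE518 α x y) 4
          = mulE518 β (phiFun s p q r x) (phiFun s p q r y) 4
      have hsum : ∑ k : Fin 3, ((![0,1,β] (ri (r k)) : F) * (x (emb (r k)) * y (emb (r k))))
          = ∑ k : Fin 3, (![0,1,β] (ri k) : F) * (x (emb k) * y (emb k)) := by
        have := Equiv.sum_comp (⟨r, ri, hir, hri⟩ : Fin 3 ≃ Fin 3)
          (fun k => (![0,1,β] (ri k) : F) * (x (emb k) * y (emb k)))
        simpa using this
      simp only [hir] at hsum
      rw [Fin.sum_univ_three, Fin.sum_univ_three] at hsum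
      have h0 : (emb 0 : Fin 5) = 0 := rfl
      have h1 : (emb 1 : Fin 5) = 1 := rfl
      have h2 : (emb 2 : Fin 5) = 2 := rfl
      rw [h0, h1, h2] at hsum
      have hc0 := hcond 0
      have hc1 := hcond 1
      have hc2 := hcond 2
      simp only [Matrix.cons_val_zero, Matrix.cons_val_one, Matrix.head_cons,
        Matrix.cons_val_two, Matrix.tail_cons] at hc0 hc1 hc2 hsum ⊢
      simp only [phiFun, mulE518]
      simp only [Matrix.cons_val_zero, Matrix.cons_val_one, Matrix.head_cons,
        Matrix.cons_val_two, Matrix.tail_cons, Matrix.cons_val_three, Matrix.cons_val_four]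
      linear_combination
        (-(x (emb (r 1)) * y (emb (r 1)) + β * (x (emb (r 2)) * y (emb (r 2))))) * hs
        + (-p) * hsum + (-(x 0 * y 0)) * hc0 + (-(x 1 * y 1)) * hc1 + (-(x 2 * y 2)) * hc2

theorem backward {F : Type*} [Field F] [IsAlgClosed F] (α β : F)
    (hα0 : α ≠ 0) (hα1 : α ≠ 1)
    (h : β = α ∨ β = α⁻¹ ∨ β = 1 - α ∨ β = (1 - α)⁻¹ ∨
        β = α * (α - 1)⁻¹ ∨ β = α⁻¹ * (α - 1)) :
    ∃ σ : (Fin 5 → F) ≃ₗ[F] (Fin 5 → F),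
      ∀ x y, σ (mulE518 α x y) = mulE518 β (σ x) (σ y) := by
  have ha1 : α - 1 ≠ 0 := sub_ne_zero.mpr hα1
  have ha1' : 1 - α ≠ 0 := fun hh => ha1 (by linear_combination -hh)
  have sqrt : ∀ p : F, ∃ s : F, s ^ 2 = p := fun p =>
    IsAlgClosed.exists_pow_nat_eq p (n := 2) (by norm_num)
  rcases h with hb | hb | hb | hb | hb | hb <;> rw [hb]
  · -- β = α
    obtain ⟨s, hs⟩ := sqrt (1 : F)
    exact exists_iso α α s 1 0 id id one_ne_zero hs (fun k => rfl) (fun k => rfl)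
      (by intro j; fin_cases j <;> simp)
  · -- β = α⁻¹
    obtain ⟨s, hs⟩ := sqrt (α⁻¹ : F)
    exact exists_iso α α⁻¹ s α⁻¹ 0 ![0, 2, 1] ![0, 2, 1] (inv_ne_zero hα0) hs
      (by decide) (by decide)
      (by intro j; fin_cases j <;> simp <;> (try field_simp) <;> (try ring))
  · -- β = 1 - α
    obtain ⟨s, hs⟩ := sqrt (-1 : F)
    exact exists_iso α (1 - α) s (-1) (-1) ![1, 0, 2] ![1, 0, 2] (neg_ne_zero.mpr one_ne_zero) hs
      (by decide) (by decide)
      (by intro j; fin_cases j <;> simp <;> (try field_simp) <;> (try ring))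
  · -- β = (1-α)⁻¹
    obtain ⟨s, hs⟩ := sqrt ((α - 1)⁻¹ : F)
    exact exists_iso α (1 - α)⁻¹ s (α - 1)⁻¹ (-((α - 1)⁻¹) ^ 2) ![1, 2, 0] ![2, 0, 1]
      (inv_ne_zero ha1) hs (by decide) (by decide)
      (by intro j; fin_cases j <;> simp <;> (try field_simp) <;> (try ring))
  · -- β = α (α-1)⁻¹
    obtain ⟨s, hs⟩ := sqrt ((1 - α)⁻¹ : F)
    exact exists_iso α (α * (α - 1)⁻¹) s (1 - α)⁻¹ (-α * ((1 - α)⁻¹) ^ 2) ![2, 1, 0] ![2, 1, 0]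
      (inv_ne_zero ha1') hs (by decide) (by decide)
      (by intro j; fin_cases j <;> simp <;> (try field_simp) <;> (try ring))
  · -- β = α⁻¹ (α-1)
    obtain ⟨s, hs⟩ := sqrt (-α⁻¹ : F)
    exact exists_iso α (α⁻¹ * (α - 1)) s (-α⁻¹) (-α⁻¹) ![2, 0, 1] ![1, 2, 0]
      (neg_ne_zero.mpr (inv_ne_zero hα0)) hs (by decide) (by decide)
      (by intro j; fin_cases j <;> simp <;> (try field_simp) <;> (try ring))

theorem cases_lemma {F : Type*} [Field F] (α β p q : F)
    (hα0 : α ≠ 0) (hα1 : α ≠ 1) (hp : p ≠ 0)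
    (H : ∀ x : F, (x - q) * (x - (q + p^2)) * (x - (q + α*p^2))
      = x * (x - p) * (x - p*β)) :
    β = α ∨ β = α⁻¹ ∨ β = 1 - α ∨ β = (1 - α)⁻¹ ∨
      β = α * (α - 1)⁻¹ ∨ β = α⁻¹ * (α - 1) := by
  have ha1 : α - 1 ≠ 0 := sub_ne_zero.mpr hα1
  have ha1' : 1 - α ≠ 0 := fun hh => ha1 (by linear_combination -hh)
  have h0 := H 0
  have h1 := H 1
  have ha := H α
  have hp2 : p^2 ≠ 0 := pow_ne_zero 2 hp
  have E0 : q * (q + p^2) * (q + α*p^2) = 0 := by linear_combination -h0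
  have e1 : (p + p*β - 3*q - (1+α)*p^2) * (α*(1-α)) = 0 := by
    linear_combination α*h1 - ha - (α-1)*h0
  have E1 : 3*q + (1+α)*p^2 = p + p*β := by
    rcases mul_eq_zero.mp e1 with h | h
    · linear_combination -h
    · exact absurd h (mul_ne_zero hα0 ha1')
  have e2 : (3*q^2 + 2*(1+α)*p^2*q + α*p^4 - p^2*β) * (α*(1-α)) = 0 := by
    linear_combination ha - α^2*h1 - (1-α^2)*h0
  have E2 : 3*q^2 + 2*(1+α)*p^2*q + α*p^4 = p^2*β := by
    rcases mul_eq_zero.mp e2 with h | h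
    · linear_combination h
    · exact absurd h (mul_ne_zero hα0 ha1')
  rcases mul_eq_zero.mp E0 with h' | hq3
  rcases mul_eq_zero.mp h' with hq1 | hq2
  · -- q = 0
    have hA : (1+α)*p = 1 + β := by
      have : p * ((1+α)*p - (1+β)) = 0 := by linear_combination E1 - (3:F)*hq1
      rcases mul_eq_zero.mp this with h | h
      exacts [absurd h hp, by linear_combination h]
    have hB : α*p^2 = β := by
      have : p^2 * (α*p^2 - β) = 0 := by
        linear_combination E2 - (3*q + 2*(1+α)*p^2)*hq1
      rcases mul_eq_zero.mp this with h | h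
      exacts [absurd h hp2, by linear_combination h]
    have key : (α - β) * (1 - α*β) = 0 := by
      linear_combination (-(α*((1:F)+β+(1+α)*p)))*hA + ((1+α)^2)*hB
    rcases mul_eq_zero.mp key with h | h
    · exact Or.inl (by linear_combination -h)
    · refine Or.inr (Or.inl ?_)
      field_simp
      linear_combination -h
  · -- q = -p^2
    have hA : (α-2)*p = 1 + β := by
      have : p * ((α-2)*p - (1+β)) = 0 := by linear_combination E1 - (3:F)*hq2
      rcases mul_eq_zero.mp this with h | h
      exacts [absurd h hp, by linear_combination h]
    have hB : (1-α)*p^2 = β := by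
      have : p^2 * ((1-α)*p^2 - β) = 0 := by
        linear_combination E2 - (3*q - 3*p^2 + 2*(1+α)*p^2)*hq2
      rcases mul_eq_zero.mp this with h | h
      exacts [absurd h hp2, by linear_combination h]
    have key : ((1-α)*β - 1) * (β - (1-α)) = 0 := by
      linear_combination (-((1-α)*((1:F)+β+(α-2)*p)))*hA + ((α-2)^2)*hB
    rcases mul_eq_zero.mp key with h | h
    · refine Or.inr (Or.inr (Or.inr (Or.inl ?_)))
      field_simp
      linear_combination h
    · exact Or.inr (Or.inr (Or.inl (by linear_combination h)))
  · -- q = -α p^2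
    have hA : (1-2*α)*p = 1 + β := by
      have : p * ((1-2*α)*p - (1+β)) = 0 := by linear_combination E1 - (3:F)*hq3
      rcases mul_eq_zero.mp this with h | h
      exacts [absurd h hp, by linear_combination h]
    have hB : α*(α-1)*p^2 = β := by
      have : p^2 * (α*(α-1)*p^2 - β) = 0 := by
        linear_combination E2 - (3*q - 3*α*p^2 + 2*(1+α)*p^2)*hq3
      rcases mul_eq_zero.mp this with h | h
      exacts [absurd h hp2, by linear_combination h]
    have key : (α*β - (α-1)) * ((α-1)*β - α) = 0 := by
      linear_combination (-(α*(α-1)*((1:F)+β+(1-2*α)*p)))*hA + ((1-2*α)^2)*hB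
    rcases mul_eq_zero.mp key with h | h
    · refine Or.inr (Or.inr (Or.inr (Or.inr (Or.inr ?_))))
      field_simp
      linear_combination h
    · refine Or.inr (Or.inr (Or.inr (Or.inr (Or.inl ?_))))
      field_simp
      linear_combination h

theorem matrixstep (α β p q : F) (w0 w1 w2 : Fin 5 → F)
    (hz0 : w0 3 = 0) (hz1 : w1 3 = 0) (hz2 : w2 3 = 0)
    (B00 : w0 0 * w0 0 + w0 1 * w0 1 + w0 2 * w0 2 = p)
    (G00 : w0 1 * w0 1 + β * (w0 2 * w0 2) + w0 3 * w0 3 = q)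
    (B11 : w1 0 * w1 0 + w1 1 * w1 1 + w1 2 * w1 2 = p)
    (G11 : w1 1 * w1 1 + β * (w1 2 * w1 2) + w1 3 * w1 3 = q + p ^ 2)
    (B22 : w2 0 * w2 0 + w2 1 * w2 1 + w2 2 * w2 2 = p)
    (G22 : w2 1 * w2 1 + β * (w2 2 * w2 2) + w2 3 * w2 3 = q + α * p ^ 2)
    (B01 : w0 0 * w1 0 + w0 1 * w1 1 + w0 2 * w1 2 = 0)
    (G01 : w0 1 * w1 1 + β * (w0 2 * w1 2) + w0 3 * w1 3 = 0)
    (B02 : w0 0 * w2 0 + w0 1 * w2 1 + w0 2 * w2 2 = 0)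
    (G02 : w0 1 * w2 1 + β * (w0 2 * w2 2) + w0 3 * w2 3 = 0)
    (B12 : w1 0 * w2 0 + w1 1 * w2 1 + w1 2 * w2 2 = 0)
    (G12 : w1 1 * w2 1 + β * (w1 2 * w2 2) + w1 3 * w2 3 = 0)
    (hp : p ≠ 0) :
    ∀ x : F, (x - q) * (x - (q + p^2)) * (x - (q + α*p^2)) = x * (x - p) * (x - p*β) := by
  set T : Matrix (Fin 3) (Fin 3) F :=
    !![w0 0, w1 0, w2 0; w0 1, w1 1, w2 1; w0 2, w1 2, w2 2] with hTdef
  set S : Matrix (Fin 3) (Fin 3) F :=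
    !![w0 0, w0 1, w0 2; w1 0, w1 1, w1 2; w2 0, w2 1, w2 2] with hSdef
  have hS : T.transpose = S := by
    ext i j; fin_cases i <;> fin_cases j <;> rfl
  have hST : S * T = !![p, 0, 0; 0, p, 0; 0, 0, p] := by
    rw [hSdef, hTdef, Matrix.mul_fin_three]
    exact congrArg Matrix.of (Matrix.vec3_eq
      (Matrix.vec3_eq (by linear_combination B00) (by linear_combination B01)
        (by linear_combination B02))
      (Matrix.vec3_eq (by linear_combination B01) (by linear_combination B11)
        (by linear_combination B12))
      (Matrix.vec3_eq (by linear_combination B02) (by linear_combination B12)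
        (by linear_combination B22)))
  have hdet2 : T.det * T.det = p ^ 3 := by
    have hd1 := congrArg Matrix.det hST
    rw [Matrix.det_mul, ← hS, Matrix.det_transpose] at hd1
    rw [hd1, Matrix.det_fin_three]
    simp
    ring
  intro x
  have hSAT : S * !![x, 0, 0; 0, x - p, 0; 0, 0, x - p*β] * T
      = !![p * (x - q), 0, 0; 0, p * (x - (q + p^2)), 0; 0, 0, p * (x - (q + α*p^2))] := by
    rw [hSdef, hTdef, Matrix.mul_fin_three, Matrix.mul_fin_three]
    exact congrArg Matrix.of (Matrix.vec3_eq
      (Matrix.vec3_eq (by linear_combination x*B00 - p*G00 + (p * w0 3)*hz0)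
        (by linear_combination x*B01 - p*G01 + (p * w1 3)*hz0)
        (by linear_combination x*B02 - p*G02 + (p * w2 3)*hz0))
      (Matrix.vec3_eq (by linear_combination x*B01 - p*G01 + (p * w0 3)*hz1)
        (by linear_combination x*B11 - p*G11 + (p * w1 3)*hz1)
        (by linear_combination x*B12 - p*G12 + (p * w2 3)*hz1))
      (Matrix.vec3_eq (by linear_combination x*B02 - p*G02 + (p * w0 3)*hz2)
        (by linear_combination x*B12 - p*G12 + (p * w1 3)*hz2)
        (by linear_combination x*B22 - p*G22 + (p * w2 3)*hz2)))
  have hdd := congrArg Matrix.det hSAT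
  rw [Matrix.det_mul, Matrix.det_mul, ← hS, Matrix.det_transpose] at hdd
  have hA : (!![x, 0, 0; 0, x - p, 0; 0, 0, x - p*β]).det = x*(x-p)*(x-p*β) := by
    rw [Matrix.det_fin_three]; simp
  have hA' : (!![p * (x - q), 0, 0; 0, p * (x - (q + p^2)), 0; 0, 0,
      p * (x - (q + α*p^2))]).det = p^3 * ((x - q) * (x - (q + p^2)) * (x - (q + α*p^2))) := by
    rw [Matrix.det_fin_three]; simp; ring
  rw [hA, hA'] at hdd
  refine mul_left_cancel₀ (pow_ne_zero 3 hp) ?_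
  linear_combination -hdd + (x*(x-p)*(x-p*β)) * hdet2

theorem forward {F : Type*} [Field F] (α β : F)
    (hα0 : α ≠ 0) (hα1 : α ≠ 1)
    (σ : (Fin 5 → F) ≃ₗ[F] (Fin 5 → F))
    (hσ : ∀ x y, σ (mulE518 α x y) = mulE518 β (σ x) (σ y)) :
    β = α ∨ β = α⁻¹ ∨ β = 1 - α ∨ β = (1 - α)⁻¹ ∨
      β = α * (α - 1)⁻¹ ∨ β = α⁻¹ * (α - 1) := by
  set v0 : Fin 5 → F := ![1,0,0,0,0] with hv0def
  set v1 : Fin 5 → F := ![0,1,0,0,0] with hv1def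
  set v2 : Fin 5 → F := ![0,0,1,0,0] with hv2def
  set v3 : Fin 5 → F := ![0,0,0,1,0] with hv3def
  set v4 : Fin 5 → F := ![0,0,0,0,1] with hv4def
  set w0 : Fin 5 → F := σ v0 with hw0def
  set w1 : Fin 5 → F := σ v1 with hw1def
  set w2 : Fin 5 → F := σ v2 with hw2def
  set p : F := σ v3 3 with hpdef
  set q : F := σ v3 4 with hqdef
  -- σ v3 in literal form
  have h00 := hσ v0 v0
  rw [show mulE518 α v0 v0 = v3 by
    funext j; fin_cases j <;> simp [mulE518, hv0def, hv3def]] at h00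
  have hσ3 : σ v3 = ![0, 0, 0, p, q] := by
    funext j
    fin_cases j
    · rw [h00]; rfl
    · rw [h00]; rfl
    · rw [h00]; rfl
    · rfl
    · rfl
  -- σ v4 in literal form
  have h33 := hσ v3 v3
  rw [show mulE518 α v3 v3 = v4 by
    funext j; fin_cases j <;> simp [mulE518, hv3def, hv4def]] at h33
  have hσ4 : σ v4 = ![0, 0, 0, 0, p^2] := by
    rw [h33, hσ3]
    funext j; fin_cases j <;> simp [mulE518]; ring
  -- p ≠ 0
  have hp : p ≠ 0 := by
    intro hp0
    have h40 : σ v4 = σ 0 := by rw [map_zero, hσ4, hp0]; funext j; fin_cases j <;> norm_num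
    have := congrFun (σ.injective h40) 4
    rw [hv4def] at this
    simp at this
  -- cross products with v3 : (σ v_i) 3 = 0 for i = 0,1,2
  have hcross : ∀ u : Fin 5 → F, mulE518 α u v3 = 0 → (σ u) 3 * p = 0 := by
    intro u hu
    have h := hσ u v3
    rw [hu, map_zero, hσ3] at h
    have := congrFun h.symm 4
    simpa [mulE518] using this
  have hz0 : w0 3 = 0 := by
    have := hcross v0 (by funext j; fin_cases j <;> simp [mulE518, hv0def, hv3def])
    rw [← hw0def] at this
    exact (mul_eq_zero.mp this).resolve_right hp
  have hz1 : w1 3 = 0 := by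
    have := hcross v1 (by funext j; fin_cases j <;> simp [mulE518, hv1def, hv3def])
    rw [← hw1def] at this
    exact (mul_eq_zero.mp this).resolve_right hp
  have hz2 : w2 3 = 0 := by
    have := hcross v2 (by funext j; fin_cases j <;> simp [mulE518, hv2def, hv3def])
    rw [← hw2def] at this
    exact (mul_eq_zero.mp this).resolve_right hp
  -- diagonal products
  -- v0*v0 = v3, already have h00
  have B00 : w0 0 * w0 0 + w0 1 * w0 1 + w0 2 * w0 2 = p := by
    have := congrFun h00 3
    rw [hσ3] at this
    simpa [mulE518] using this.symm
  have G00 : w0 1 * w0 1 + β * (w0 2 * w0 2) + w0 3 * w0 3 = q := by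
    have := congrFun h00 4
    rw [hσ3] at this
    simpa [mulE518] using this.symm
  have h11 := hσ v1 v1
  rw [show mulE518 α v1 v1 = v3 + v4 by
    funext j; fin_cases j <;> simp [mulE518, hv1def, hv3def, hv4def],
    map_add, hσ3, hσ4] at h11
  have B11 : w1 0 * w1 0 + w1 1 * w1 1 + w1 2 * w1 2 = p := by
    have := congrFun h11 3
    simpa [mulE518] using this.symm
  have G11 : w1 1 * w1 1 + β * (w1 2 * w1 2) + w1 3 * w1 3 = q + p^2 := by
    have := congrFun h11 4
    simpa [mulE518] using this.symm
  have h22 := hσ v2 v2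
  rw [show mulE518 α v2 v2 = v3 + α • v4 by
    funext j; fin_cases j <;> simp [mulE518, hv2def, hv3def, hv4def],
    map_add, map_smul, hσ3, hσ4] at h22
  have B22 : w2 0 * w2 0 + w2 1 * w2 1 + w2 2 * w2 2 = p := by
    have := congrFun h22 3
    simpa [mulE518] using this.symm
  have G22 : w2 1 * w2 1 + β * (w2 2 * w2 2) + w2 3 * w2 3 = q + α * p^2 := by
    have := congrFun h22 4
    simpa [mulE518] using this.symm
  -- off-diagonal products
  have hoff : ∀ u u' : Fin 5 → F, mulE518 α u u' = 0 →
      ((σ u) 0 * (σ u') 0 + (σ u) 1 * (σ u') 1 + (σ u) 2 * (σ u') 2 = 0 ∧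
       (σ u) 1 * (σ u') 1 + β * ((σ u) 2 * (σ u') 2) + (σ u) 3 * (σ u') 3 = 0) := by
    intro u u' hu
    have h := hσ u u'
    rw [hu, map_zero] at h
    constructor
    · have := congrFun h.symm 3; simpa [mulE518] using this
    · have := congrFun h.symm 4; simpa [mulE518] using this
  have h01 := hoff v0 v1 (by funext j; fin_cases j <;> simp [mulE518, hv0def, hv1def])
  have h02 := hoff v0 v2 (by funext j; fin_cases j <;> simp [mulE518, hv0def, hv2def])
  have h12 := hoff v1 v2 (by funext j; fin_cases j <;> simp [mulE518, hv1def, hv2def])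
  rw [← hw0def, ← hw1def] at h01
  rw [← hw0def, ← hw2def] at h02
  rw [← hw1def, ← hw2def] at h12
  obtain ⟨B01, G01⟩ := h01
  obtain ⟨B02, G02⟩ := h02
  obtain ⟨B12, G12⟩ := h12
  exact cases_lemma α β p q hα0 hα1 hp
    (matrixstep α β p q w0 w1 w2 hz0 hz1 hz2 B00 G00 B11 G11 B22 G22
      B01 G01 B02 G02 B12 G12 hp)

end Stmt16

/-- Over an algebraically closed field `F`, for `α, β ∈ F \ {0,1}`,
the algebras `E₅,₁₈^α` and `E₅,₁₈^β` are isomorphic if and only if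
`β ∈ {α, α⁻¹, 1−α, (1−α)⁻¹, α(α−1)⁻¹, α⁻¹(α−1)}`. -/
theorem stmt16 {F : Type*} [Field F] [IsAlgClosed F] (α β : F)
    (hα0 : α ≠ 0) (hα1 : α ≠ 1) (hβ0 : β ≠ 0) (hβ1 : β ≠ 1) :
    (∃ σ : (Fin 5 → F) ≃ₗ[F] (Fin 5 → F),
        ∀ x y, σ (mulE518 α x y) = mulE518 β (σ x) (σ y)) ↔
      (β = α ∨ β = α⁻¹ ∨ β = 1 - α ∨ β = (1 - α)⁻¹ ∨
        β = α * (α - 1)⁻¹ ∨ β = α⁻¹ * (α - 1)) := by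
  constructor
  · rintro ⟨σ, hσ⟩
    exact Stmt16.forward α β hα0 hα1 σ hσ
  · exact Stmt16.backward α β hα0 hα1
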